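/- Let n ≥ 3 and let p : Fin n → EuclideanSpace ℝ (Fin 2) be an injective family of n points such that every angle ∠(p i, p j, p k) over pairwise distinct indices i, j, k is at least π / n. Then the points are in strictly convex position: for every index i, the point p i does not lie in the convex hull of the remaining points { p j : j ≠ i }. -/

import Mathlib

open Real EuclideanGeometry

private lemma int_eq_of_mul {m k : ℤ} (hm0 : 0 < m) (h1 : 0 < m * k) (h2 : m * k < 2 * m) :
    m * k = m := by
  have hk1 : 0 < k := by by_contra h; push_neg at h; nlinarith
  have hk2 : k < 2 := by by_contra h; push_neg at h; nlinarith
  have : k = 1 := by omega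
  rw [this, mul_one]

private lemma emod_sub_self (a m : ℤ) : (a - m) % m = a % m := by
  have h : a - m = a + m * (-1) := by ring
  rw [h, Int.add_mul_emod_self_left]

private lemma cluster_lemma {m L : ℕ} (hm : 3 * L + 1 ≤ m) (F : Finset (Fin m))
    (hF : ∀ a ∈ F, ∀ b ∈ F,
      min (((b.val : ℤ) - a.val) % m) (((a.val : ℤ) - b.val) % m) ≤ L) :
    F.card ≤ L + 1 := by
  rcases F.eq_empty_or_nonempty with rfl | ⟨a₀, ha₀⟩
  · simp
  have hm0 : (0:ℤ) < (m:ℤ) := by exact_mod_cast (by omega : 0 < m)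
  have hL0 : (0:ℤ) ≤ L := by positivity
  have hLm : 2 * (L:ℤ) < m := by exact_mod_cast (by omega : 2 * L < m)
  set ρ : Fin m → ℤ := fun s => ((s.val : ℤ) - a₀.val + L) % m - L with hρdef
  have hfacts : ∀ s ∈ F, (-L : ℤ) ≤ ρ s ∧ ρ s ≤ L ∧ ρ s % m = ((s.val : ℤ) - a₀.val) % m := by
    intro s hs
    set x : ℤ := (s.val : ℤ) - a₀.val with hx
    set e : ℤ := x % m with he
    have he0 : 0 ≤ e := Int.emod_nonneg _ (ne_of_gt hm0)
    have heM : e < m := Int.emod_lt_of_pos _ hm0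
    have hrew : ρ s = (e + L) % m - L := by
      rw [hρdef]
      simp only [← hx]
      rw [Int.add_emod x L m, Int.emod_eq_of_lt hL0 (by omega), ← he]
    set e' : ℤ := ((a₀.val : ℤ) - s.val) % m with he'
    have he'0 : 0 ≤ e' := Int.emod_nonneg _ (ne_of_gt hm0)
    have he'M : e' < m := Int.emod_lt_of_pos _ hm0
    have hmin := hF a₀ ha₀ s hs
    rw [← hx, ← he, ← he'] at hmin
    by_cases hcase : e ≤ L
    · have h1 : (e + L) % m = e + L := Int.emod_eq_of_lt (by omega) (by omega)
      refine ⟨by rw [hrew, h1]; omega, by rw [hrew, h1]; omega, ?_⟩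
      rw [hrew, h1, add_sub_cancel_right, he]
      exact Int.emod_emod_of_dvd x dvd_rfl
    · have he'L : e' ≤ L := (min_le_iff.mp hmin).resolve_left (by omega)
      have hsum : e + e' = m := by
        have hdvd : (m:ℤ) ∣ e + e' := by
          have h0 : (e + e') % m = 0 := by
            rw [he, he', ← Int.add_emod]
            have hz : x + ((a₀.val : ℤ) - s.val) = 0 := by rw [hx]; ring
            rw [hz, Int.zero_emod]
          exact Int.dvd_of_emod_eq_zero h0
        obtain ⟨k, hk⟩ := hdvd
        rw [hk]
        exact int_eq_of_mul hm0 (by omega) (by omega)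
      have h1 : (e + L) % m = e + L - m := by
        rw [← emod_sub_self (e + L) m]
        exact Int.emod_eq_of_lt (by omega) (by omega)
      refine ⟨by rw [hrew, h1]; omega, by rw [hrew, h1]; omega, ?_⟩
      rw [hrew, h1]
      have hz : e + L - m - L = e - m := by ring
      rw [hz, emod_sub_self, he]
      exact Int.emod_emod_of_dvd x dvd_rfl
  have hval : ∀ s ∈ F, ((ρ s + a₀.val) % m) = (s.val : ℤ) := by
    intro s hs
    obtain ⟨_, _, h3⟩ := hfacts s hs
    have h4 : ((ρ s + a₀.val)) % m = (s.val : ℤ) % m := by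
      rw [Int.add_emod, h3, ← Int.add_emod]
      have hz : (s.val : ℤ) - a₀.val + a₀.val = s.val := by ring
      rw [hz]
    rw [h4]
    exact Int.emod_eq_of_lt (by positivity) (by exact_mod_cast s.isLt)
  have hinj : Set.InjOn ρ F := by
    intro s hs s' hs' hss
    have : (s.val : ℤ) = s'.val := by rw [← hval s hs, ← hval s' hs', hss]
    exact Fin.ext (by exact_mod_cast this)
  obtain ⟨slo, hsloF, hslo⟩ := F.exists_min_image ρ ⟨a₀, ha₀⟩
  obtain ⟨shi, hshiF, hshi⟩ := F.exists_max_image ρ ⟨a₀, ha₀⟩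
  set D : ℤ := ρ shi - ρ slo with hD
  have hD0 : 0 ≤ D := by have := hslo shi hshiF; omega
  have hD2L : D ≤ 2 * L := by
    obtain ⟨h1, h2, _⟩ := hfacts slo hsloF
    obtain ⟨h1', h2', _⟩ := hfacts shi hshiF
    omega
  have hcong : ∀ s ∈ F, ∀ s' ∈ F, ((s'.val : ℤ) - s.val) % m = (ρ s' - ρ s) % m := by
    intro s hs s' hs'
    obtain ⟨_, _, h3⟩ := hfacts s hs
    obtain ⟨_, _, h3'⟩ := hfacts s' hs'
    have hz : ((s'.val : ℤ) - s.val) = ((s'.val : ℤ) - a₀.val) - ((s.val : ℤ) - a₀.val) := by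
      ring
    rw [hz, Int.sub_emod, ← h3, ← h3', ← Int.sub_emod]
  have hDL : D ≤ L := by
    by_contra hcon
    push_neg at hcon
    have hmin := hF slo hsloF shi hshiF
    have he1 : ((shi.val : ℤ) - slo.val) % m = D := by
      rw [hcong slo hsloF shi hshiF, ← hD, Int.emod_eq_of_lt hD0 (by omega)]
    have he2 : ((slo.val : ℤ) - shi.val) % m = m - D := by
      rw [hcong shi hshiF slo hsloF]
      have hz : ρ slo - ρ shi = -D := by rw [hD]; ring
      rw [hz]
      have hz2 : -D = (m - D) - m := by ring
      rw [hz2, emod_sub_self]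
      exact Int.emod_eq_of_lt (by omega) (by omega)
    rw [he1, he2] at hmin
    omega
  have hmaps : ∀ s ∈ F, ρ s ∈ Finset.Icc (ρ slo) (ρ slo + L) := by
    intro s hs
    rw [Finset.mem_Icc]
    exact ⟨hslo s hs, by have := hshi s hs; omega⟩
  have hcard := Finset.card_le_card_of_injOn ρ hmaps hinj
  rwa [Int.card_Icc, show ρ slo + (L:ℤ) + 1 - ρ slo = ((L + 1 : ℕ) : ℤ) by push_cast; ring,
    Int.toNat_natCast] at hcard

private lemma re_mul_exp (g : ℂ) (t : ℝ) :
    (g * Complex.exp ((t:ℂ) * Complex.I)).re = g.re * Real.cos t - g.im * Real.sin t := by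
  rw [Complex.mul_re, Complex.exp_ofReal_mul_I_re, Complex.exp_ofReal_mul_I_im]

private lemma sqrt_ineq {s x y c : ℝ} (hs : 0 < s) (hc : 0 < c) (hsc : s^2 + c^2 = 1)
    (hx : 0 ≤ x) (hxy : |y| * s ≤ x * c) : s * Real.sqrt (x^2 + y^2) ≤ x := by
  have h2 : (s * Real.sqrt (x^2 + y^2))^2 ≤ x^2 := by
    rw [mul_pow, Real.sq_sqrt (by positivity)]
    have h0 : (abs y * s) ^ 2 ≤ (x * c) ^ 2 := pow_le_pow_left₀ (mul_nonneg (abs_nonneg y) hs.le) hxy 2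
    nlinarith [h0, sq_abs y, sq_nonneg x, sq_nonneg y]
  have h3 : 0 ≤ s * Real.sqrt (x^2 + y^2) := by positivity
  have h4 := Real.sqrt_le_sqrt h2
  rwa [Real.sqrt_sq h3, Real.sqrt_sq hx] at h4
  
private lemma wedge_lemma {δ : ℝ} (hδ0 : 0 < δ) (hδπ : δ < π) {g : ℂ} (hg : g ≠ 0)
    (h1 : 0 ≤ (g * Complex.exp ((↑(δ/2) : ℂ) * Complex.I)).re)
    (h2 : 0 ≤ (g * Complex.exp ((↑(-(δ/2)) : ℂ) * Complex.I)).re) :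
    0 < g.re ∧ |Complex.arg g| ≤ (π - δ)/2 := by
  rw [re_mul_exp] at h1 h2
  rw [Real.cos_neg, Real.sin_neg] at h2
  have hc : 0 < Real.cos (δ/2) :=
    Real.cos_pos_of_mem_Ioo ⟨by linarith [pi_pos], by linarith⟩
  have hs : 0 < Real.sin (δ/2) :=
    Real.sin_pos_of_pos_of_lt_pi (by linarith) (by linarith [pi_pos])
  have hxy : |g.im| * Real.sin (δ/2) ≤ g.re * Real.cos (δ/2) := by
    rcases abs_cases g.im with ⟨hy, _⟩ | ⟨hy, _⟩ <;> rw [hy] <;> linarith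
  have hx0 : 0 ≤ g.re := by nlinarith [abs_nonneg g.im]
  have hx : 0 < g.re := by
    rcases eq_or_lt_of_le hx0 with hh | hh
    · exfalso
      have hy : g.im = 0 := by
        have h5 : |g.im| ≤ 0 := by nlinarith
        have := abs_nonneg g.im
        have : |g.im| = 0 := le_antisymm h5 this
        exact abs_eq_zero.mp this
      exact hg (Complex.ext (by simp [← hh]) (by simp [hy]))
    · exact hh
  refine ⟨hx, ?_⟩
  have habs : 0 < ‖g‖ := norm_pos_iff.mpr hg
  have hcosbound : Real.sin (δ/2) ≤ Real.cos (Complex.arg g) := by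
    rw [Complex.cos_arg hg, le_div_iff₀ habs]
    have habseq : ‖g‖ = Real.sqrt (g.re^2 + g.im^2) := by
      rw [Complex.norm_eq_sqrt_sq_add_sq]
    rw [mul_comm, habseq, mul_comm]
    exact sqrt_ineq hs hc (by rw [Real.sin_sq_add_cos_sq]) hx0 hxy
  by_contra hcon
  push_neg at hcon
  have h6 : Real.cos (Complex.arg g) < Real.cos ((π - δ)/2) := by
    rw [← Real.cos_abs (Complex.arg g)]
    apply Real.strictAntiOn_cos ⟨by linarith, by linarith⟩
      ⟨abs_nonneg _, Complex.abs_arg_le_pi g⟩ hcon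
  rw [show (π - δ)/2 = π/2 - δ/2 by ring, Real.cos_pi_div_two_sub] at h6
  linarith

private lemma conj_exp_I (t : ℝ) : (starRingEnd ℂ) (Complex.exp ((t:ℂ) * Complex.I)) =
    Complex.exp ((↑(-t) : ℂ) * Complex.I) := by
  rw [← Complex.exp_conj, map_mul, Complex.conj_ofReal, Complex.conj_I]
  congr 1
  push_cast
  ring

private lemma conj_mul_polar (u w : ℂ) : (starRingEnd ℂ) u * w =
    (↑(‖u‖ * ‖w‖) : ℂ) *
      Complex.exp (↑(Complex.arg w - Complex.arg u) * Complex.I) := by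
  conv_lhs => rw [← Complex.norm_mul_exp_arg_mul_I u, ← Complex.norm_mul_exp_arg_mul_I w]
  rw [map_mul, Complex.conj_ofReal, conj_exp_I, mul_mul_mul_comm, ← Complex.exp_add,
    ← Complex.ofReal_mul]
  congr 1
  push_cast
  ring

private lemma angle_eq_abs_sub_arg {u w : ℂ} (hu : u ≠ 0) (hw : w ≠ 0)
    (hd : |Complex.arg u - Complex.arg w| ≤ π) :
    InnerProductGeometry.angle u w = |Complex.arg u - Complex.arg w| := by
  have hu0 : 0 < ‖u‖ := norm_pos_iff.mpr hu
  have hw0 : 0 < ‖w‖ := norm_pos_iff.mpr hw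
  unfold InnerProductGeometry.angle
  rw [Complex.inner, mul_comm w, conj_mul_polar, Complex.re_ofReal_mul, Complex.exp_ofReal_mul_I_re]
  have hA : ‖u‖ * ‖w‖ * Real.cos (Complex.arg w - Complex.arg u) /
      (‖u‖ * ‖w‖) =
      Real.cos (Complex.arg w - Complex.arg u) := by
    field_simp
  rw [hA]
  rw [show Complex.arg w - Complex.arg u = -(Complex.arg u - Complex.arg w) by ring,
    Real.cos_neg, ← Real.cos_abs]
  exact Real.arccos_cos (abs_nonneg _) hd

private lemma angle_unit_mul {c : ℂ} (hc : ‖c‖ = 1) (u w : ℂ) :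
    InnerProductGeometry.angle (c * u) (c * w) = InnerProductGeometry.angle u w := by
  unfold InnerProductGeometry.angle
  have hcc : (starRingEnd ℂ) c * c = 1 := by
    rw [Complex.conj_mul']
    norm_cast
    rw [hc, one_pow]
  have hin : (inner ℝ (c * u) (c * w) : ℝ) = inner ℝ u w := by
    rw [Complex.inner, Complex.inner]
    have : (c * w) * (starRingEnd ℂ) (c * u) = ((starRingEnd ℂ) c * c) *
        (w * (starRingEnd ℂ) u) := by rw [map_mul]; ring
    rw [this, hcc, one_mul]
  rw [hin, norm_mul, norm_mul, hc, one_mul, one_mul]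

private lemma floor_pigeon {s a b : ℝ} (hs : 0 < s) (ha : 0 ≤ a) (hb : 0 ≤ b)
    (hfl : ⌊a / s⌋₊ = ⌊b / s⌋₊) : |a - b| < s := by
  have h1 : (⌊a/s⌋₊ : ℝ) ≤ a/s := Nat.floor_le (by positivity)
  have h2 : a/s < ⌊a/s⌋₊ + 1 := Nat.lt_floor_add_one _
  have h3 : (⌊b/s⌋₊ : ℝ) ≤ b/s := Nat.floor_le (by positivity)
  have h4 : b/s < ⌊b/s⌋₊ + 1 := Nat.lt_floor_add_one _
  rw [← hfl] at h3 h4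
  have ha' : a = (a/s) * s := by field_simp
  have hb' : b = (b/s) * s := by field_simp
  rw [abs_lt]
  constructor <;> nlinarith


private lemma emod_sum_eq {m : ℕ} (hm : 0 < m) (A B : Fin m) (hne : A ≠ B) :
    ((B.val : ℤ) - A.val) % m + ((A.val : ℤ) - B.val) % m = m := by
  have hmZ : (0:ℤ) < m := by exact_mod_cast hm
  set x : ℤ := (B.val : ℤ) - A.val with hx
  have hxb : -(m:ℤ) < x ∧ x < m := by
    constructor
    · have : (B.val : ℤ) ≥ 0 := by positivity
      have h2 : (A.val : ℤ) < m := by exact_mod_cast A.isLt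
      omega
    · have : (A.val : ℤ) ≥ 0 := by positivity
      have h2 : (B.val : ℤ) < m := by exact_mod_cast B.isLt
      omega
  have hx0 : x ≠ 0 := by
    intro hc
    apply hne
    apply Fin.ext
    have : (A.val : ℤ) = B.val := by omega
    exact_mod_cast this
  set e1 : ℤ := x % m with he1
  have hrw : ((A.val : ℤ) - B.val) = -x := by rw [hx]; ring
  rw [hrw]
  set e2 : ℤ := (-x) % m with he2
  have h10 : 0 ≤ e1 := Int.emod_nonneg _ (ne_of_gt hmZ)
  have h1M : e1 < m := Int.emod_lt_of_pos _ hmZ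
  have h20 : 0 ≤ e2 := Int.emod_nonneg _ (ne_of_gt hmZ)
  have h2M : e2 < m := Int.emod_lt_of_pos _ hmZ
  have hdvd : (m:ℤ) ∣ e1 + e2 := by
    apply Int.dvd_of_emod_eq_zero
    rw [he1, he2, ← Int.add_emod]
    simp
  have h1pos : 0 < e1 := by
    rcases eq_or_lt_of_le h10 with hc | hc
    · exfalso
      have hdx : (m:ℤ) ∣ x := Int.dvd_of_emod_eq_zero hc.symm
      obtain ⟨j, hj⟩ := hdx
      have hj1 : j < 1 := by nlinarith
      have hj2 : -1 < j := by nlinarith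
      have : j = 0 := by omega
      rw [this, mul_zero] at hj
      exact hx0 hj
    · exact hc
  obtain ⟨k, hk⟩ := hdvd
  rw [hk]
  exact int_eq_of_mul hmZ (by omega) (by omega)

set_option maxHeartbeats 3000000 in
theorem extremal_config_strictly_convex (n : ℕ) (hn : 3 ≤ n)
    (p : Fin n → EuclideanSpace ℝ (Fin 2)) (hp : Function.Injective p)
    (h : ∀ i j k : Fin n, i ≠ j → j ≠ k → i ≠ k → π / n ≤ ∠ (p i) (p j) (p k)) :
    ∀ i : Fin n, p i ∉ convexHull ℝ (p '' {j : Fin n | j ≠ i}) := by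
  intro i hq
  have hnR : (0:ℝ) < n := by positivity
  -- move to ℂ
  set Φ : ℂ ≃ₗᵢ[ℝ] EuclideanSpace ℝ (Fin 2) :=
    Complex.isometryOfOrthonormal (EuclideanSpace.basisFun (Fin 2) ℝ) with hΦ
  set z : Fin n → ℂ := fun j => Φ.symm (p j) with hzdef
  have hzinj : Function.Injective z := fun a b hab => hp (Φ.symm.injective hab)
  have hangle : ∀ j v k : Fin n,
      ∠ (p j) (p v) (p k) = InnerProductGeometry.angle (z j - z v) (z k - z v) := by
    intro j v k
    have e1 : z j - z v = Φ.symm.toLinearIsometry (p j - p v) := by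
      simp [hzdef, map_sub]
    have e2 : z k - z v = Φ.symm.toLinearIsometry (p k - p v) := by
      simp [hzdef, map_sub]
    rw [e1, e2, LinearIsometry.angle_map]
    rfl
  -- numbers
  set m : ℕ := 2 * n ^ 2 + 1 with hmdef
  have hm_pos : 0 < m := by positivity
  have hmZ : (0:ℤ) < (m:ℤ) := by exact_mod_cast hm_pos
  -- directions and maximizers
  set θ : Fin m → ℝ := fun t => 2 * π * t.val / m with hθdef
  set score : Fin m → Fin n → ℝ :=
    fun t j => ((z j) * Complex.exp ((↑(-(θ t)) : ℂ) * Complex.I)).re with hscoredef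
  have hVex : ∀ t : Fin m, ∃ v ∈ Finset.univ.erase i,
      ∀ j ∈ Finset.univ.erase i, score t j ≤ score t v := by
    intro t
    apply Finset.exists_max_image
    rw [← Finset.card_pos, Finset.card_erase_of_mem (Finset.mem_univ i), Finset.card_univ,
      Fintype.card_fin]
    omega
  choose V hV1 hV2 using hVex
  -- all points (including i, via the hull) are bounded by the maximizer
  have hscore_all : ∀ t : Fin m, ∀ j : Fin n, score t j ≤ score t (V t) := by
    intro t j
    by_cases hj : j = i
    · rw [hj]
      set f : EuclideanSpace ℝ (Fin 2) → ℝ :=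
        fun x => ((Φ.symm x) * Complex.exp ((↑(-(θ t)) : ℂ) * Complex.I)).re with hfdef
      have hlin : IsLinearMap ℝ f := by
        constructor
        · intro a b
          rw [hfdef]
          simp only [map_add, add_mul, Complex.add_re]
        · intro r a
          rw [hfdef]
          simp only [map_smul, smul_eq_mul]
          rw [Complex.real_smul, mul_assoc, Complex.re_ofReal_mul]
      have hsub : p '' {j : Fin n | j ≠ i} ⊆ {x | f x ≤ score t (V t)} := by
        rintro x ⟨j', hj', rfl⟩
        exact hV2 t j' (Finset.mem_erase.mpr ⟨hj', Finset.mem_univ j'⟩)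
      exact convexHull_min hsub (convex_halfSpace_le hlin _) hq
    · exact hV2 t j (Finset.mem_erase.mpr ⟨hj, Finset.mem_univ j⟩)
  -- pigeonhole: some maximizer v occurs for many directions
  have hpig : ∃ v ∈ Finset.univ.erase i,
      2 * n + 1 < (Finset.univ.filter fun t : Fin m => V t = v).card := by
    apply Finset.exists_lt_card_fiber_of_mul_lt_card_of_maps_to (fun t _ => hV1 t)
    rw [Finset.card_erase_of_mem (Finset.mem_univ i), Finset.card_univ, Finset.card_univ,
      Fintype.card_fin, Fintype.card_fin]
    have : (n - 1) * (2 * n + 1) < 2 * n ^ 2 + 1 := by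
      rcases Nat.exists_eq_add_of_le hn with ⟨k, rfl⟩
      have h1 : 3 + k - 1 = k + 2 := by omega
      rw [h1]
      nlinarith
    omega
  obtain ⟨v, hvmem, hvcard⟩ := hpig
  set F : Finset (Fin m) := Finset.univ.filter (fun t : Fin m => V t = v) with hFdef
  have hvne : v ≠ i := (Finset.mem_erase.mp hvmem).1
  -- main analytic step
  have key : ∀ A B : Fin m, A ∈ F → B ∈ F →
      2 * (n:ℤ) + 1 ≤ ((B.val : ℤ) - A.val) % m → 2 * (((B.val : ℤ) - A.val) % m) < m →
      False := by
    intro A B hAF hBF hge hlt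
    have hVA : V A = v := (Finset.mem_filter.mp hAF).2
    have hVB : V B = v := (Finset.mem_filter.mp hBF).2
    set eZ : ℤ := ((B.val : ℤ) - A.val) % m with heZ
    have he0 : 0 ≤ eZ := Int.emod_nonneg _ (ne_of_gt hmZ)
    set c : ℕ := eZ.toNat with hcdef
    have hcZ : (c:ℤ) = eZ := Int.toNat_of_nonneg he0
    have hc_low : 2 * n + 1 ≤ c := by omega
    have hc_high : 2 * c < m := by omega
    -- B.val = (A.val + c) % m
    have hBval : B.val = (A.val + c) % m := by
      have h2 : ((A.val : ℤ) + eZ) % m = (B.val : ℤ) % m := by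
        rw [heZ, Int.add_emod ((A.val:ℤ)) _, Int.emod_emod_of_dvd _ dvd_rfl, ← Int.add_emod]
        have h3 : (A.val:ℤ) + ((B.val:ℤ) - A.val) = B.val := by ring
        rw [h3]
      have h4 : ((A.val + c : ℕ) : ℤ) % m = ((A.val : ℤ) + eZ) % m := by
        push_cast [hcZ]
        ring_nf
      have h5 : (B.val : ℤ) % m = B.val := Int.emod_eq_of_lt (by positivity)
        (by exact_mod_cast B.isLt)
      have h6 : (((A.val + c) % m : ℕ) : ℤ) = (B.val : ℤ) := by
        rw [Int.natCast_mod, h4, h2, h5]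
      exact_mod_cast h6.symm
    set k : ℕ := (A.val + c) / m with hkdef
    have hk : m * k + B.val = A.val + c := by
      rw [hBval, hkdef]
      exact Nat.div_add_mod _ _
    have hmR : (0:ℝ) < m := by exact_mod_cast hm_pos
    have hcR : (0:ℝ) < c := by exact_mod_cast (by omega : 0 < c)
    have hkR : (A.val : ℝ) + c = m * k + B.val := by exact_mod_cast hk.symm
    set δ : ℝ := 2 * π * c / m with hδdef
    have hδ0 : 0 < δ := div_pos (mul_pos (by positivity) hcR) hmR
    have hδπ : δ < π := by
      rw [hδdef, div_lt_iff₀ hmR]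
      have hcast : (2:ℝ) * c < m := by exact_mod_cast hc_high
      nlinarith [pi_pos]
    have hδn : 2 * π / n < δ := by
      rw [hδdef, div_lt_div_iff₀ hnR hmR]
      have hmcn : m < c * n := by nlinarith [hn, hc_low]
      have hcast : (m:ℝ) < c * n := by exact_mod_cast hmcn
      nlinarith [pi_pos]
    -- half-plane constraints from maximality
    have hcons : ∀ t : Fin m, V t = v → ∀ j : Fin n,
        ((z j - z v) * Complex.exp ((↑(-(θ t)) : ℂ) * Complex.I)).re ≤ 0 := by
      intro t hvt j
      have h1 := hscore_all t j
      rw [hvt] at h1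
      simp only [hscoredef] at h1
      rw [sub_mul, Complex.sub_re]
      linarith only [h1]
    -- θ B in terms of θ A and δ
    have hBR : (B.val : ℝ) = (A.val : ℝ) + c - m * k := by linarith only [hkR]
    have hθB : θ B = θ A + δ - 2 * π * k := by
      simp only [hθdef, hδdef]
      rw [hBR]
      have hm0 : (m:ℝ) ≠ 0 := ne_of_gt hmR
      field_simp
    have hexpB : Complex.exp ((↑(-(θ B)) : ℂ) * Complex.I) =
        Complex.exp ((↑(-(θ A + δ)) : ℂ) * Complex.I) := by
      rw [hθB, show -(θ A + δ - 2*π*(k:ℝ)) = -(θ A + δ) + 2*π*(k:ℝ) by ring]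
      rw [Complex.ofReal_add, add_mul, Complex.exp_add]
      have hone : Complex.exp ((↑(2*π*(k:ℝ)) : ℂ) * Complex.I) = 1 := by
        rw [← Complex.exp_int_mul_two_pi_mul_I (k:ℤ)]
        congr 1
        push_cast
        ring
      rw [hone, mul_one]
    -- rotated vectors
    set w0 : ℂ := Complex.exp ((↑(-(θ A + δ/2)) : ℂ) * Complex.I) with hw0
    set g : Fin n → ℂ := fun j => (-w0) * (z j - z v) with hgdef
    have hg_ne : ∀ j, j ≠ v → g j ≠ 0 := by
      intro j hj
      apply mul_ne_zero (neg_ne_zero.mpr (Complex.exp_ne_zero _))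
      exact sub_ne_zero.mpr (fun hh => hj (hzinj hh))
    have hwedge : ∀ j, j ≠ v → 0 < (g j).re ∧ |Complex.arg (g j)| ≤ (π - δ)/2 := by
      intro j hj
      apply wedge_lemma hδ0 hδπ (hg_ne j hj)
      · have hrw : g j * Complex.exp ((↑(δ/2):ℂ) * Complex.I)
            = -((z j - z v) * Complex.exp ((↑(-(θ A)):ℂ) * Complex.I)) := by
          have hw1 : w0 * Complex.exp ((↑(δ/2):ℂ) * Complex.I)
              = Complex.exp ((↑(-(θ A)):ℂ) * Complex.I) := by
            rw [hw0, ← Complex.exp_add]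
            congr 1
            push_cast
            ring
          calc g j * Complex.exp ((↑(δ/2):ℂ) * Complex.I)
              = -((z j - z v) * (w0 * Complex.exp ((↑(δ/2):ℂ) * Complex.I))) := by
                rw [hgdef]; ring
            _ = -((z j - z v) * Complex.exp ((↑(-(θ A)):ℂ) * Complex.I)) := by rw [hw1]
        rw [hrw, Complex.neg_re, neg_nonneg]
        exact hcons A hVA j
      · have hrw : g j * Complex.exp ((↑(-(δ/2)):ℂ) * Complex.I)
            = -((z j - z v) * Complex.exp ((↑(-(θ A + δ)):ℂ) * Complex.I)) := by
          have hw1 : w0 * Complex.exp ((↑(-(δ/2)):ℂ) * Complex.I)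
              = Complex.exp ((↑(-(θ A + δ)):ℂ) * Complex.I) := by
            rw [hw0, ← Complex.exp_add]
            congr 1
            push_cast
            ring
          calc g j * Complex.exp ((↑(-(δ/2)):ℂ) * Complex.I)
              = -((z j - z v) * (w0 * Complex.exp ((↑(-(δ/2)):ℂ) * Complex.I))) := by
                rw [hgdef]; ring
            _ = -((z j - z v) * Complex.exp ((↑(-(θ A + δ)):ℂ) * Complex.I)) := by rw [hw1]
        rw [hrw, Complex.neg_re, neg_nonneg, ← hexpB]
        exact hcons B hVB j
    -- pairwise angle lower bounds
    have hang2 : ∀ j k : Fin n, j ≠ v → k ≠ v → j ≠ k →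
        π / n ≤ |Complex.arg (g j) - Complex.arg (g k)| := by
      intro j k hjv hkv hjk
      have h1 := h j v k hjv (fun hh => hkv hh.symm) hjk
      rw [hangle j v k] at h1
      have habs1 : ‖-w0‖ = 1 := by
        rw [norm_neg, hw0, Complex.norm_exp_ofReal_mul_I]
      have h2 : InnerProductGeometry.angle (z j - z v) (z k - z v)
          = InnerProductGeometry.angle (g j) (g k) :=
        (angle_unit_mul habs1 (z j - z v) (z k - z v)).symm
      have h3 : InnerProductGeometry.angle (g j) (g k)
          = |Complex.arg (g j) - Complex.arg (g k)| := by
        apply angle_eq_abs_sub_arg (hg_ne j hjv) (hg_ne k hkv)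
        have hb1 := (hwedge j hjv).2
        have hb2 := (hwedge k hkv).2
        have htri : |Complex.arg (g j) - Complex.arg (g k)|
            ≤ |Complex.arg (g j)| + |Complex.arg (g k)| := by
          calc |Complex.arg (g j) - Complex.arg (g k)|
              = |Complex.arg (g j) + -(Complex.arg (g k))| := by rw [sub_eq_add_neg]
            _ ≤ |Complex.arg (g j)| + |-(Complex.arg (g k))| := abs_add_le _ _
            _ = |Complex.arg (g j)| + |Complex.arg (g k)| := by rw [abs_neg]
        linarith
      rw [h2, h3] at h1
      exact h1
    -- final pigeonhole on buckets
    have hπn : 0 < π / n := div_pos pi_pos hnR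
    set ψ : ℝ := (π - δ)/2 with hψdef
    set bucket : Fin n → ℕ := fun j => ⌊(Complex.arg (g j) + ψ) / (π / n)⌋₊ with hbdef
    have hmaps : ∀ j ∈ Finset.univ.erase v, bucket j ∈ Finset.range (n - 2) := by
      intro j hj
      have hjv : j ≠ v := (Finset.mem_erase.mp hj).1
      obtain ⟨-, habs⟩ := hwedge j hjv
      obtain ⟨habs1, habs2⟩ := abs_le.mp habs
      rw [Finset.mem_range]
      simp only [hbdef]
      have h0 : 0 ≤ Complex.arg (g j) + ψ := by rw [hψdef]; linarith
      have hc2 : ((n - 2 : ℕ) : ℝ) = (n:ℝ) - 2 := by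
        have h22 : (2:ℕ) ≤ n := by omega
        push_cast [h22]
        ring
      rw [Nat.floor_lt (by positivity)]
      rw [div_lt_iff₀ hπn, hc2]
      have hexp : ((n:ℝ) - 2) * (π/n) = π - 2*π/n := by field_simp
      rw [hexp, hψdef]
      linarith
    have hcards : (Finset.range (n-2)).card < (Finset.univ.erase v).card := by
      rw [Finset.card_erase_of_mem (Finset.mem_univ v), Finset.card_univ, Fintype.card_fin,
        Finset.card_range]
      omega
    obtain ⟨j, hjmem, k', hkmem, hjk, hbeq⟩ :=
      Finset.exists_ne_map_eq_of_card_lt_of_maps_to hcards hmaps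
    have hjv : j ≠ v := (Finset.mem_erase.mp hjmem).1
    have hkv : k' ≠ v := (Finset.mem_erase.mp hkmem).1
    have hnn : ∀ l, l ≠ v → 0 ≤ Complex.arg (g l) + ψ := by
      intro l hl
      obtain ⟨-, habs⟩ := hwedge l hl
      obtain ⟨habs1, -⟩ := abs_le.mp habs
      rw [hψdef]
      linarith
    have hlt2 := floor_pigeon hπn (hnn j hjv) (hnn k' hkv) hbeq
    have hge2 := hang2 j k' hjv hkv hjk
    have heq3 : Complex.arg (g j) + ψ - (Complex.arg (g k') + ψ)
        = Complex.arg (g j) - Complex.arg (g k') := by ring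
    rw [heq3] at hlt2
    linarith
  -- find a suitably separated pair in F
  have hpair : ∃ A ∈ F, ∃ B ∈ F,
      2 * (n:ℤ) + 1 ≤ ((B.val : ℤ) - A.val) % m ∧ 2 * (((B.val : ℤ) - A.val) % m) < m := by
    by_contra hcon
    push_neg at hcon
    obtain ⟨K, hK⟩ : ∃ K : ℕ, m = 2 * K + 1 := ⟨n ^ 2, hmdef⟩
    have hKZ : (m:ℤ) = 2 * (K:ℤ) + 1 := by exact_mod_cast hK
    have hcard := cluster_lemma (m := m) (L := 2 * n) (by
        have h3n : 3 * n ≤ n ^ 2 := by nlinarith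
        omega) F ?_
    · omega
    · intro a ha b hb
      by_cases hab : a = b
      · subst hab
        simp only [sub_self, Int.zero_emod]
        simp
      · have hsum := emod_sum_eq hm_pos a b hab
        by_contra hgt
        push_neg at hgt
        rw [lt_min_iff] at hgt
        obtain ⟨hg1, hg2⟩ := hgt
        have hcast : ((2 * n : ℕ) : ℤ) = 2 * (n:ℤ) := by push_cast; ring
        rw [hcast] at hg1 hg2
        rcases le_total (((b.val : ℤ) - a.val) % m) (((a.val : ℤ) - b.val) % m) with hle | hle
        · have hub := hcon a ha b hb (by omega)
          omega
        · have hub := hcon b hb a ha (by omega)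
          omega
  obtain ⟨A, hA, B, hB, h1, h2⟩ := hpair
  exact key A B hA hB h1 h2
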